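/- With the stabilized numbers m_{k,i} defined by the recurrence m_{k,i} = m_{k,i-1} + Σ_{j≥i} (-1)^{j-i} m_{k - C(j-i+2,2), j+1} (m_{0,i} = 1, m_{k,0} = 0, m_{t,i} = 0 for t < 0), and ξ_0(y) = Σ_{k≥0} m_{k,1} y^k, for every t ≥ 1 the t-th power of ξ_0 satisfies ξ_0(y)^t = Σ_{k≥0} m_{k,t} y^k. -/

import Mathlib

open Finset PowerSeries

/-- With the stabilized numbers `m k i` defined by the recurrence
`m k i = m k (i-1) + ∑_{j ≥ i} (-1)^{j-i} m (k - C(j-i+2,2)) (j+1)`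
(`m 0 i = 1` for `i ≥ 1`, `m k 0 = 0`, terms with negative first index are zero), and
`ξ₀(y) = ∑_k (m k 1) y^k`, for every `t ≥ 1` one has `ξ₀(y)^t = ∑_k (m k t) y^k`. -/
theorem xi_powers
    (m : ℕ → ℕ → ℤ)
    (hbase : ∀ i : ℕ, 1 ≤ i → m 0 i = 1)
    (hzero : ∀ k : ℕ, m k 0 = 0)
    (hrec : ∀ k i : ℕ, 1 ≤ k → 1 ≤ i →
      m k i = m k (i - 1) + ∑ j ∈ Finset.Ico i (k + i),
        (-1 : ℤ) ^ (j - i) *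
          (if (j - i + 2).choose 2 ≤ k then m (k - (j - i + 2).choose 2) (j + 1) else 0)) :
    ∀ t : ℕ, 1 ≤ t →
      (PowerSeries.mk fun k => m k 1) ^ t = PowerSeries.mk fun k => m k t := by
  classical
  set F : PowerSeries ℤ := PowerSeries.mk fun k => m k 1 with hF
  have hcF : ∀ a : ℕ, (PowerSeries.coeff (R := ℤ) a) F = m a 1 := by
    intro a; rw [hF, coeff_mk]
  -- the choose 2 lower bound
  have hch : ∀ d : ℕ, d + 1 ≤ (d + 2).choose 2 := by
    intro d
    rw [Nat.choose_two_right]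
    rw [Nat.le_div_iff_mul_le (by norm_num)]
    have : d + 2 - 1 = d + 1 := rfl
    rw [this]; nlinarith
  -- canonical form of the recurrence
  have hrec' : ∀ k i : ℕ, 1 ≤ k → 1 ≤ i →
      m k i = m k (i - 1) + ∑ d ∈ Finset.range k, (-1 : ℤ) ^ d *
        (if (d + 2).choose 2 ≤ k then m (k - (d + 2).choose 2) (d + i + 1) else 0) := by
    intro k i hk hi
    rw [hrec k i hk hi]
    congr 1
    rw [Finset.sum_Ico_eq_sum_range]
    have h : k + i - i = k := by omega
    rw [h]
    apply Finset.sum_congr rfl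
    intro d _
    have h2 : i + d - i = d := by omega
    rw [h2, show i + d + 1 = d + i + 1 by omega]
  suffices H : ∀ k t : ℕ, 1 ≤ t → (PowerSeries.coeff (R := ℤ) k) (F ^ t) = m k t by
    intro t ht
    ext k
    rw [coeff_mk]
    exact H k t ht
  intro k
  induction k using Nat.strong_induction_on with
  | _ k IH =>
    intro t ht
    rcases Nat.eq_zero_or_pos k with rfl | hk
    · -- k = 0
      rw [PowerSeries.coeff_zero_eq_constantCoeff, map_pow]
      have : (PowerSeries.constantCoeff (R := ℤ)) F = 1 := by
        rw [hF, PowerSeries.constantCoeff_mk, hbase 1 le_rfl]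
      rw [this, one_pow, hbase t ht]
    · -- k ≥ 1 : key convolution lemma
      have lemA : ∀ s : ℕ,
          (PowerSeries.coeff (R := ℤ) k) (F ^ (s + 1)) = (PowerSeries.coeff (R := ℤ) k) (F ^ s)
            + ∑ d ∈ Finset.range k, (-1 : ℤ) ^ d *
                (if (d + 2).choose 2 ≤ k then m (k - (d + 2).choose 2) (d + s + 2) else 0) := by
        intro s
        have h1 : F ^ (s + 1) = F * F ^ s := by rw [pow_succ, mul_comm]
        rw [h1, PowerSeries.coeff_mul, Finset.Nat.sum_antidiagonal_eq_sum_range_succ_mk,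
          Finset.sum_range_succ']
        simp only [hcF]
        rw [hbase 1 le_rfl, Nat.sub_zero, one_mul, add_comm]
        congr 1
        -- remaining: ∑ a ∈ range k, m (a+1) 1 * coeff (k-(a+1)) (F^s) = target sum
        have step : ∀ a ∈ Finset.range k,
            m (a + 1) 1 * (PowerSeries.coeff (R := ℤ) (k - (a + 1))) (F ^ s)
              = ∑ d ∈ Finset.range k, ((-1 : ℤ) ^ d *
                  (if (d + 2).choose 2 ≤ a + 1 then m (a + 1 - (d + 2).choose 2) (d + 2) else 0))
                  * (PowerSeries.coeff (R := ℤ) (k - (a + 1))) (F ^ s) := by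
          intro a ha
          rw [hrec' (a + 1) 1 (by omega) le_rfl, hzero, zero_add, Finset.sum_mul]
          apply Finset.sum_subset
          · apply Finset.range_subset_range.2
            simp only [Finset.mem_range] at ha; omega
          · intro d _ hd
            simp only [Finset.mem_range, not_lt] at hd
            have : ¬ (d + 2).choose 2 ≤ a + 1 := by
              have := hch d; omega
            rw [if_neg this, mul_zero, zero_mul]
        rw [Finset.sum_congr rfl step, Finset.sum_comm]
        apply Finset.sum_congr rfl
        intro d hd
        simp only [Finset.mem_range] at hd
        have hc1 : 1 ≤ (d + 2).choose 2 := by have := hch d; omega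
        set c : ℕ := (d + 2).choose 2 with hcc
        simp only [mul_assoc, ← Finset.mul_sum]
        congr 1
        by_cases hck : c ≤ k
        · rw [if_pos hck]
          -- restrict to Ico (c-1) k
          have e1 : ∑ a ∈ Finset.range k,
              (if c ≤ a + 1 then m (a + 1 - c) (d + 2) else 0)
                * (PowerSeries.coeff (R := ℤ) (k - (a + 1))) (F ^ s)
              = ∑ a ∈ Finset.Ico (c - 1) k,
                  m (a + 1 - c) (d + 2) * (PowerSeries.coeff (R := ℤ) (k - (a + 1))) (F ^ s) := by
            rw [Finset.range_eq_Ico, ← Finset.sum_Ico_consecutive (fun a =>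
              (if c ≤ a + 1 then m (a + 1 - c) (d + 2) else 0)
                * (PowerSeries.coeff (R := ℤ) (k - (a + 1))) (F ^ s))
              (Nat.zero_le (c - 1)) (by omega : c - 1 ≤ k)]
            have z1 : ∑ a ∈ Finset.Ico 0 (c - 1),
                (if c ≤ a + 1 then m (a + 1 - c) (d + 2) else 0)
                  * (PowerSeries.coeff (R := ℤ) (k - (a + 1))) (F ^ s) = 0 := by
              apply Finset.sum_eq_zero
              intro a ha
              simp only [Finset.mem_Ico] at ha
              rw [if_neg (by omega), zero_mul]
            rw [z1, zero_add]
            apply Finset.sum_congr rfl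
            intro a ha
            simp only [Finset.mem_Ico] at ha
            rw [if_pos (by omega)]
          rw [e1, Finset.sum_Ico_eq_sum_range]
          have hkc : k - (c - 1) = k - c + 1 := by omega
          rw [hkc]
          have e2 : ∀ b ∈ Finset.range (k - c + 1),
              m (c - 1 + b + 1 - c) (d + 2)
                * (PowerSeries.coeff (R := ℤ) (k - (c - 1 + b + 1))) (F ^ s)
              = (PowerSeries.coeff (R := ℤ) b) (F ^ (d + 2))
                  * (PowerSeries.coeff (R := ℤ) (k - c - b)) (F ^ s) := by
            intro b hb
            simp only [Finset.mem_range] at hb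
            have h3 : c - 1 + b + 1 - c = b := by omega
            have h4 : k - (c - 1 + b + 1) = k - c - b := by omega
            rw [h3, h4, IH b (by omega) (d + 2) (by omega)]
          rw [Finset.sum_congr rfl e2]
          have e3 : ∑ b ∈ Finset.range (k - c + 1),
              (PowerSeries.coeff (R := ℤ) b) (F ^ (d + 2))
                * (PowerSeries.coeff (R := ℤ) (k - c - b)) (F ^ s)
              = (PowerSeries.coeff (R := ℤ) (k - c)) (F ^ (d + 2) * F ^ s) := by
            rw [PowerSeries.coeff_mul, Finset.Nat.sum_antidiagonal_eq_sum_range_succ_mk]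
          rw [e3, ← pow_add, show d + 2 + s = d + s + 2 by omega,
            IH (k - c) (by omega) (d + s + 2) (by omega)]
        · rw [if_neg hck]
          apply Finset.sum_eq_zero
          intro a ha
          simp only [Finset.mem_range] at ha
          rw [if_neg (by omega), zero_mul]
      -- induction on t
      have main : ∀ s : ℕ, (PowerSeries.coeff (R := ℤ) k) (F ^ (s + 1)) = m k (s + 1) := by
        intro s
        induction s with
        | zero => rw [pow_one]; exact hcF k
        | succ s ihs =>
          have h5 : s + 2 - 1 = s + 1 := rfl
          have h6 : (∑ d ∈ Finset.range k, (-1 : ℤ) ^ d *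
              (if (d + 2).choose 2 ≤ k then m (k - (d + 2).choose 2) (d + (s + 1) + 2) else 0))
            = ∑ d ∈ Finset.range k, (-1 : ℤ) ^ d *
              (if (d + 2).choose 2 ≤ k then m (k - (d + 2).choose 2) (d + (s + 2) + 1) else 0) := by
            apply Finset.sum_congr rfl
            intro d _
            rw [show d + (s + 1) + 2 = d + (s + 2) + 1 by omega]
          rw [lemA (s + 1), ihs, h6, hrec' k (s + 2) hk (by omega), h5]
      obtain ⟨s, rfl⟩ : ∃ s, t = s + 1 := ⟨t - 1, by omega⟩
      exact main s
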